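/- For a general linear quantum system, suppose Ker(O_s) := ⋂_{k=0}^{2n-1} Ker(𝒞 (J_n Ω)^k) is invariant under Ω, i.e. Ω x ∈ Ker(O_s) for every x ∈ Ker(O_s). Let R̃_c̄ō := Ker(O_s) ∩ Ker(O_s J_n), where Ker(O_s J_n) := ⋂_{k=0}^{2n-1} Ker(𝒞 (J_n Ω)^k J_n). Then 𝒜 maps R̃_c̄ō into R̃_c̄ō, and 𝒜 maps the orthogonal complement (R̃_c̄ō)^⊥ into (R̃_c̄ō)^⊥ (equivalently, 𝒜ᴴ maps R̃_c̄ō into R̃_c̄ō). -/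

import Mathlib

open Matrix

noncomputable section

/-- `J_k = [I 0; 0 -I]` acting on `ℂ^{2k} = ℂ^k ⊕ ℂ^k`. -/
def Jmat (k : ℕ) : Matrix (Fin k ⊕ Fin k) (Fin k ⊕ Fin k) ℂ :=
  Matrix.fromBlocks 1 0 0 (-1)


lemma Jmat_mul_Jmat (k : ℕ) : Jmat k * Jmat k = 1 := by
  simp [Jmat, Matrix.fromBlocks_multiply, ← Matrix.fromBlocks_one]

lemma Jmat_conjTranspose (k : ℕ) : (Jmat k)ᴴ = Jmat k := by
  simp [Jmat, Matrix.fromBlocks_conjTranspose]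

/-- Entrywise complex conjugation of a matrix. -/
def mconj {α β : Type} (M : Matrix α β ℂ) : Matrix α β ℂ :=
  M.map (starRingEnd ℂ)

/-- The doubled-up matrix `Δ(U,V) = [U V; conj V  conj U]`. -/
def doubledUp {k r : ℕ} (U V : Matrix (Fin k) (Fin r) ℂ) :
    Matrix (Fin k ⊕ Fin k) (Fin r ⊕ Fin r) ℂ :=
  Matrix.fromBlocks U V (mconj V) (mconj U)

/-- The ♭-adjoint `X♭ = J_r Xᴴ J_k` of `X ∈ ℂ^{2k×2r}`. -/
def flat {k r : ℕ} (X : Matrix (Fin k ⊕ Fin k) (Fin r ⊕ Fin r) ℂ) :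
    Matrix (Fin r ⊕ Fin r) (Fin k ⊕ Fin k) ℂ :=
  Jmat r * Xᴴ * Jmat k


section AuxLemmas

lemma sum_mulVec' {ι m n : Type} [Fintype n] (s : Finset ι) (f : ι → Matrix m n ℂ) (z : n → ℂ) :
    (∑ i ∈ s, f i) *ᵥ z = ∑ i ∈ s, (f i) *ᵥ z :=
  map_sum (Matrix.mulVec.addMonoidHomLeft z) f s

lemma aux_pow_card {ι : Type} [Fintype ι] [DecidableEq ι] (hc : 0 < Fintype.card ι)
    (M : Matrix ι ι ℂ) :
    ∃ c : ℕ → ℂ, M ^ (Fintype.card ι) =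
      ∑ i ∈ Finset.range (Fintype.card ι), c i • M ^ i := by
  set N := Fintype.card ι with hN
  set p := M.charpoly with hp
  have hmonic : p.Monic := M.charpoly_monic
  have hdeg : p.natDegree = N := M.charpoly_natDegree_eq_dim
  set r : Polynomial ℂ := Polynomial.X ^ N - p with hr
  have haeval : (Polynomial.aeval M) r = M ^ N := by
    rw [hr, map_sub, Polynomial.aeval_X_pow, Matrix.aeval_self_charpoly, sub_zero]
  have hcoeff : ∀ k, N ≤ k → r.coeff k = 0 := by
    intro k hk
    rw [hr, Polynomial.coeff_sub, Polynomial.coeff_X_pow]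
    rcases eq_or_lt_of_le hk with h | h
    · subst h
      have h1 : p.coeff N = 1 := by
        rw [← hdeg]; exact hmonic.coeff_natDegree
      simp [h1]
    · have h0 : p.coeff k = 0 := Polynomial.coeff_eq_zero_of_natDegree_lt (by omega)
      simp [h0]; omega
  have hrdeg : r.natDegree < N := by
    rcases eq_or_ne r 0 with h0 | h0
    · rw [h0]; simpa using hc
    · rw [Polynomial.natDegree_lt_iff_degree_lt h0,
        Polynomial.degree_lt_iff_coeff_zero]
      exact hcoeff
  refine ⟨fun i => r.coeff i, ?_⟩
  rw [← haeval, Polynomial.aeval_eq_sum_range' hrdeg]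

lemma aux_all_pow {ι κ : Type} [Fintype ι] [DecidableEq ι] [Fintype κ]
    (hc : 0 < Fintype.card ι)
    (M : Matrix ι ι ℂ) (C : Matrix κ ι ℂ) (z : ι → ℂ)
    (h : ∀ k < Fintype.card ι, (C * M ^ k) *ᵥ z = 0) :
    ∀ j, (C * M ^ j) *ᵥ z = 0 := by
  obtain ⟨c, hcM⟩ := aux_pow_card hc M
  set N := Fintype.card ι with hN
  intro j
  induction j using Nat.strong_induction_on with
  | _ j ih =>
    rcases lt_or_ge j N with hj | hj
    · exact h j hj
    · have hj' : j = N + (j - N) := by omega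
      rw [hj', pow_add, hcM, Finset.sum_mul, Matrix.mul_sum, sum_mulVec']
      apply Finset.sum_eq_zero
      intro i hi
      rw [Finset.mem_range] at hi
      rw [smul_mul_assoc, Matrix.mul_smul, Matrix.smul_mulVec,
        ← pow_add, ih (i + (j - N)) (by omega), smul_zero]

end AuxLemmas

/-- Orthogonal complement of a subspace of `ℂ^ι` w.r.t. the standard Hermitian
inner product `⟪y, x⟫ = (star y) ⬝ᵥ x`. -/
def orthComp {ι : Type} [Fintype ι] (S : Submodule ℂ (ι → ℂ)) : Submodule ℂ (ι → ℂ) where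
  carrier := {x | ∀ y ∈ S, star y ⬝ᵥ x = 0}
  add_mem' := by
    intro a b ha hb y hy
    simp only [Set.mem_setOf_eq] at *
    rw [dotProduct_add, ha y hy, hb y hy, add_zero]
  zero_mem' := by
    intro y hy
    simp
  smul_mem' := by
    intro c x hx y hy
    simp only [Set.mem_setOf_eq] at *
    rw [dotProduct_smul, hx y hy, smul_zero]

/-- The controllable subspace `Im(C_G) = ∑_{k<2n} Im(𝒜ᵏℬ)`. -/
def ctrbSub (n m : ℕ) (𝒜 : Matrix (Fin n ⊕ Fin n) (Fin n ⊕ Fin n) ℂ)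
    (ℬ : Matrix (Fin n ⊕ Fin n) (Fin m ⊕ Fin m) ℂ) : Submodule ℂ (Fin n ⊕ Fin n → ℂ) :=
  ⨆ k ∈ Finset.range (2 * n), LinearMap.range ((𝒜 ^ k * ℬ).mulVecLin)

/-- The unobservable subspace `Ker(O_G) = ⋂_{k<2n} Ker(𝒞𝒜ᵏ)`. -/
def unobsSub (n m : ℕ) (𝒜 : Matrix (Fin n ⊕ Fin n) (Fin n ⊕ Fin n) ℂ)
    (𝒞 : Matrix (Fin m ⊕ Fin m) (Fin n ⊕ Fin n) ℂ) : Submodule ℂ (Fin n ⊕ Fin n → ℂ) :=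
  ⨅ k ∈ Finset.range (2 * n), LinearMap.ker ((𝒞 * 𝒜 ^ k).mulVecLin)

/-- **Proposition 1.** For a general linear quantum system, if `Ker(O_s)` is invariant
under `Ω`, then `𝒜` maps `R̃_c̄ō = Ker(O_s) ∩ Ker(O_s J_n)` into itself and maps its
orthogonal complement into itself. -/
theorem prop_Rc_invariance
    (n m : ℕ) (hn : 0 < n) (hm : 0 < m)
    (Ωm Ωp : Matrix (Fin n) (Fin n) ℂ) (Cm Cp : Matrix (Fin m) (Fin n) ℂ)
    (Ω : Matrix (Fin n ⊕ Fin n) (Fin n ⊕ Fin n) ℂ) (hΩ : Ω = doubledUp Ωm Ωp)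
    (hΩH : Ω.IsHermitian)
    (𝒞 : Matrix (Fin m ⊕ Fin m) (Fin n ⊕ Fin n) ℂ) (h𝒞 : 𝒞 = doubledUp Cm Cp)
    (𝒜 : Matrix (Fin n ⊕ Fin n) (Fin n ⊕ Fin n) ℂ)
    (h𝒜 : 𝒜 = (-Complex.I) • (Jmat n * Ω) - (1 / 2 : ℂ) • (flat 𝒞 * 𝒞))
    (ℬ : Matrix (Fin n ⊕ Fin n) (Fin m ⊕ Fin m) ℂ) (hℬ : ℬ = -flat 𝒞)
    (KOs : Submodule ℂ (Fin n ⊕ Fin n → ℂ))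
    (hKOs : KOs = ⨅ k ∈ Finset.range (2 * n),
      LinearMap.ker ((𝒞 * (Jmat n * Ω) ^ k).mulVecLin))
    (KOsJ : Submodule ℂ (Fin n ⊕ Fin n → ℂ))
    (hKOsJ : KOsJ = ⨅ k ∈ Finset.range (2 * n),
      LinearMap.ker ((𝒞 * (Jmat n * Ω) ^ k * Jmat n).mulVecLin))
    (hinv : ∀ x ∈ KOs, Ω *ᵥ x ∈ KOs) :
    (∀ x ∈ KOs ⊓ KOsJ, 𝒜 *ᵥ x ∈ KOs ⊓ KOsJ) ∧
    (∀ x ∈ orthComp (KOs ⊓ KOsJ), 𝒜 *ᵥ x ∈ orthComp (KOs ⊓ KOsJ)) := by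
  set M := Jmat n * Ω with hM
  have hcard : Fintype.card (Fin n ⊕ Fin n) = 2 * n := by simp [two_mul]
  have hcpos : 0 < Fintype.card (Fin n ⊕ Fin n) := by omega
  have hJJ : Jmat n * Jmat n = 1 := Jmat_mul_Jmat n
  have hJH : (Jmat n)ᴴ = Jmat n := Jmat_conjTranspose n
  have memKOs : ∀ x, x ∈ KOs ↔ ∀ k, k < 2 * n → (𝒞 * M ^ k) *ᵥ x = 0 := by
    intro x; rw [hKOs]
    simp only [Submodule.mem_iInf, Finset.mem_range, LinearMap.mem_ker, Matrix.mulVecLin_apply]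
  have memKOsJ : ∀ x, x ∈ KOsJ ↔ ∀ k, k < 2 * n → (𝒞 * M ^ k * Jmat n) *ᵥ x = 0 := by
    intro x; rw [hKOsJ]
    simp only [Submodule.mem_iInf, Finset.mem_range, LinearMap.mem_ker, Matrix.mulVecLin_apply]
  have hall : ∀ z ∈ KOs, ∀ j, (𝒞 * M ^ j) *ᵥ z = 0 := by
    intro z hz
    apply aux_all_pow hcpos
    intro k hk
    exact (memKOs z).1 hz k (by omega)
  have hJM : Jmat n * M = Ω := by
    rw [hM, ← Matrix.mul_assoc, hJJ, Matrix.one_mul]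
  have hC0 : ∀ x ∈ KOs, 𝒞 *ᵥ x = 0 := by
    intro x hx
    have := (memKOs x).1 hx 0 (by omega)
    rwa [pow_zero, Matrix.mul_one] at this
  -- Part 1
  have part1 : ∀ x ∈ KOs ⊓ KOsJ, 𝒜 *ᵥ x ∈ KOs ⊓ KOsJ := by
    intro x hx
    obtain ⟨hx1, hx2⟩ := Submodule.mem_inf.mp hx
    have hMx : M *ᵥ x ∈ KOs ⊓ KOsJ := by
      refine Submodule.mem_inf.mpr ⟨(memKOs _).2 fun k hk => ?_, (memKOsJ _).2 fun k hk => ?_⟩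
      · rw [Matrix.mulVec_mulVec, Matrix.mul_assoc, ← pow_succ]
        exact hall x hx1 (k + 1)
      · rw [Matrix.mulVec_mulVec, Matrix.mul_assoc (𝒞 * M ^ k), hJM, ← Matrix.mulVec_mulVec]
        exact (memKOs _).1 (hinv x hx1) k hk
    have hAx : 𝒜 *ᵥ x = (-Complex.I) • (M *ᵥ x) := by
      rw [h𝒜, Matrix.sub_mulVec, Matrix.smul_mulVec, Matrix.smul_mulVec,
        ← Matrix.mulVec_mulVec x (flat 𝒞) 𝒞, hC0 x hx1, Matrix.mulVec_zero, smul_zero, sub_zero]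
    rw [hAx]
    exact Submodule.smul_mem _ _ hMx
  refine ⟨part1, ?_⟩
  -- Part 2
  have hAHy : ∀ y ∈ KOs ⊓ KOsJ, 𝒜ᴴ *ᵥ y ∈ KOs ⊓ KOsJ := by
    intro y hy
    obtain ⟨hy1, hy2⟩ := Submodule.mem_inf.mp hy
    set w := Jmat n *ᵥ y with hw
    have hwKOs : w ∈ KOs := (memKOs w).2 fun k hk => by
      rw [hw, Matrix.mulVec_mulVec]
      exact (memKOsJ y).1 hy2 k hk
    have hΩw : Ω *ᵥ w ∈ KOs := hinv w hwKOs
    have hallw := hall w hwKOs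
    have hΩwJ : Ω *ᵥ w ∈ KOsJ := (memKOsJ _).2 fun k hk => by
      rw [Matrix.mulVec_mulVec, Matrix.mul_assoc (𝒞 * M ^ k) (Jmat n) Ω, ← hM,
        Matrix.mul_assoc, ← pow_succ]
      exact hallw (k + 1)
    have hCw : 𝒞 *ᵥ w = 0 := hC0 w hwKOs
    have hAH : 𝒜ᴴ *ᵥ y = Complex.I • (Ω *ᵥ w) := by
      have hs1 : star (-Complex.I) = Complex.I := by simp
      have hs2 : star (1 / 2 : ℂ) = (1 / 2 : ℂ) := by
        rw [Complex.star_def, map_div₀, _root_.map_one, map_ofNat]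
      have e1 : 𝒜ᴴ = Complex.I • (Ω * Jmat n)
          - (1 / 2 : ℂ) • (𝒞ᴴ * (Jmat m * (𝒞 * Jmat n))) := by
        rw [h𝒜, hM]
        simp only [Matrix.conjTranspose_sub, Matrix.conjTranspose_smul, flat,
          Matrix.conjTranspose_mul, Matrix.conjTranspose_conjTranspose, hJH,
          Jmat_conjTranspose m, hΩH.eq, hs1, hs2, Matrix.mul_assoc]
      rw [e1, Matrix.sub_mulVec, Matrix.smul_mulVec, Matrix.smul_mulVec,
        ← Matrix.mulVec_mulVec y Ω (Jmat n),
        ← Matrix.mulVec_mulVec y (𝒞ᴴ) (Jmat m * (𝒞 * Jmat n)),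
        ← Matrix.mulVec_mulVec y (Jmat m) (𝒞 * Jmat n),
        ← Matrix.mulVec_mulVec y 𝒞 (Jmat n), ← hw, hCw]
      simp
    rw [hAH]
    exact Submodule.smul_mem _ _ (Submodule.mem_inf.mpr ⟨hΩw, hΩwJ⟩)
  intro x hx
  intro y hy
  have key : star y ⬝ᵥ (𝒜 *ᵥ x) = star (𝒜ᴴ *ᵥ y) ⬝ᵥ x := by
    rw [Matrix.star_mulVec, Matrix.conjTranspose_conjTranspose, Matrix.dotProduct_mulVec]
  rw [key]
  exact hx (𝒜ᴴ *ᵥ y) (hAHy y hy)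


end
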